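/- The optimal value of the linear program max γ subject to p₁ ≥ γ; (1/2)p₁ + p₂ ≥ γ; (1/2)p₁ + (1/2)p₂ + p₃ ≥ γ; (1/2)p₁ + (2/3)p₂ + (1/2)p₃ + (1/3)p₄ ≥ γ; p₁+p₂+p₃+p₄ ≤ 1; p₁,p₂,p₃,p₄ ≥ 0 is exactly 5/9, attained at p₁ = 5/9, p₂ = 3/9, p₃ = 1/9, p₄ = 0. -/
import Mathlib

theorem stmt16 :
    (∀ γ p1 p2 p3 p4 : ℝ,
      p1 ≥ γ →
      (1 / 2) * p1 + p2 ≥ γ →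
      (1 / 2) * p1 + (1 / 2) * p2 + p3 ≥ γ →
      (1 / 2) * p1 + (2 / 3) * p2 + (1 / 2) * p3 + (1 / 3) * p4 ≥ γ →
      p1 + p2 + p3 + p4 ≤ 1 →
      0 ≤ p1 → 0 ≤ p2 → 0 ≤ p3 → 0 ≤ p4 →
      γ ≤ 5 / 9) ∧
    ((5 / 9 : ℝ) ≥ 5 / 9 ∧
     (1 / 2) * (5 / 9 : ℝ) + 3 / 9 ≥ 5 / 9 ∧
     (1 / 2) * (5 / 9 : ℝ) + (1 / 2) * (3 / 9) + 1 / 9 ≥ 5 / 9 ∧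
     (1 / 2) * (5 / 9 : ℝ) + (2 / 3) * (3 / 9) + (1 / 2) * (1 / 9) + (1 / 3) * 0 ≥ 5 / 9 ∧
     (5 / 9 : ℝ) + 3 / 9 + 1 / 9 + 0 ≤ 1 ∧
     (0 : ℝ) ≤ 5 / 9 ∧ (0 : ℝ) ≤ 3 / 9 ∧ (0 : ℝ) ≤ 1 / 9 ∧ (0 : ℝ) ≤ 0) := by
  constructor
  · intro γ p1 p2 p3 p4 h1 h2 h3 h4 h5 _ _ _ _
    linarith
  · norm_num
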